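/- If l : List ℤ is nonempty, strictly decreasing (i.e., l.Sorted (· > ·)), and has length n, then qcost l = n*(n+1)/2 - 1. -/

import Mathlib

/-- Cost of the paper's simple QuickSort: each call on a list of length `N ≥ 2`
costs `N`, plus the cost of recursive calls on the strict-left and strict-right
partitions of the tail around the pivot `l.head!`. -/
def qcost (l : List ℤ) : ℕ :=
  if _h : l.length ≤ 1 then 0
  else
    l.length + qcost (l.tail.filter (· < l.head!)) + qcost (l.tail.filter (· > l.head!))
termination_by l.length
decreasing_by
  · calc (l.tail.filter (· < l.head!)).length ≤ l.tail.length := List.length_filter_le _ _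
      _ < l.length := by rw [List.length_tail]; omega
  · calc (l.tail.filter (· > l.head!)).length ≤ l.tail.length := List.length_filter_le _ _
      _ < l.length := by rw [List.length_tail]; omega

/-- A strictly decreasing input of length `n` is a worst case for simple QuickSort:
its cost is `n*(n+1)/2 - 1`. -/
theorem qcost_of_sorted_gt (l : List ℤ) (n : ℕ)
    (hne : l ≠ []) (hs : l.Pairwise (· > ·)) (hl : l.length = n) :
    qcost l = n * (n + 1) / 2 - 1 := by
  induction n using Nat.strong_induction_on generalizing l with
  | _ n ih =>
  match l, hne with
  | a :: t, _ =>
    match t with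
    | [] =>
      simp at hl
      rw [qcost]
      simp [← hl]
    | b :: t' =>
      rw [qcost]
      have hlen : (a :: b :: t').length = n := hl
      have hn : 2 ≤ n := by simp at hlen; omega
      rw [dif_neg (by simp only [List.length_cons] at hlen ⊢; omega)]
      have hall : ∀ x ∈ b :: t', x < a := by
        intro x hx
        exact (List.pairwise_cons.mp hs).1 x hx
      have h1 : (b :: t').filter (· < a) = b :: t' := by
        rw [List.filter_eq_self]; intro x hx; simpa using hall x hx
      have h2 : (b :: t').filter (· > a) = [] := by
        rw [List.filter_eq_nil_iff]; intro x hx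
        simp [not_lt]; exact le_of_lt (hall x hx)
      rw [List.head!_cons]
      simp only [List.tail_cons, List.head!_cons, h1, h2]
      rw [show qcost [] = 0 from by rw [qcost]; simp]
      rw [ih (n-1) (by omega) (b :: t') (by simp) (List.pairwise_cons.mp hs).2
        (by simp at hlen ⊢; omega)]
      rw [hl]
      have hnm : n - 1 + 1 = n := by omega
      rw [hnm]
      have h1 : 2 ∣ n * (n + 1) := (Nat.even_mul_succ_self n).two_dvd
      have h2 : 2 ∣ (n - 1) * n := by
        have := (Nat.even_mul_succ_self (n - 1)).two_dvd
        rwa [hnm] at this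
      have e1 := Nat.div_mul_cancel h1
      have e2 := Nat.div_mul_cancel h2
      have h3 : n * (n + 1) = (n - 1) * n + 2 * n := by
        obtain ⟨m, rfl⟩ : ∃ m, n = m + 1 := ⟨n - 1, by omega⟩
        simp; ring
      have hB : 2 ≤ (n - 1) * n := by
        calc 2 = 1 * 2 := by norm_num
          _ ≤ (n - 1) * n := Nat.mul_le_mul (by omega) (by omega)
      omega
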